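/- Let γ = γ_{1,3}^{-1/2}, i.e. γ(t) = (3/2)·exp(2πi t) + (1/2)·exp(6πi t). Then the unit tangent vector γ'(t)/|γ'(t)| tends to i as t → 1/4 from the right, and tends to -i as t → 1/4 from the left. In particular the two one-sided unit tangent limits at t = 1/4 are opposite, so t = 1/4 is a cusp point of γ. -/

import Mathlib

open Filter Topology

/-- The curve `γ_{1,3}^{-1/2}(t) = (3/2)·exp(2πi t) + (1/2)·exp(6πi t)`. -/
noncomputable def gammaSpecial (t : ℝ) : ℂ :=
  (3/2 : ℂ) * Complex.exp (2 * Real.pi * Complex.I * t) +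
    (1/2 : ℂ) * Complex.exp (2 * Real.pi * Complex.I * 3 * t)

lemma hasDerivAt_exp_const_mul (c : ℂ) (t : ℝ) :
    HasDerivAt (fun t : ℝ => Complex.exp (c * t)) (c * Complex.exp (c * t)) t := by
  have h1 : HasDerivAt (fun t : ℝ => (t : ℂ)) 1 t := by
    simpa using (hasDerivAt_id t).ofReal_comp
  have h2 := ((h1.const_mul c).cexp)
  simpa [mul_comm] using h2

lemma deriv_gamma (t : ℝ) :
    deriv gammaSpecial t
      = ((6 * Real.pi * Real.cos (2 * Real.pi * t) : ℝ) : ℂ) *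
          (Complex.I * Complex.exp (4 * Real.pi * Complex.I * t)) := by
  have h1 := (hasDerivAt_exp_const_mul (2 * Real.pi * Complex.I) t).const_mul (3/2 : ℂ)
  have h3 := (hasDerivAt_exp_const_mul (2 * Real.pi * Complex.I * 3) t).const_mul (1/2 : ℂ)
  have h : HasDerivAt gammaSpecial
      ((3/2 : ℂ) * ((2 * Real.pi * Complex.I) * Complex.exp (2 * Real.pi * Complex.I * t))
        + (1/2 : ℂ) * ((2 * Real.pi * Complex.I * 3) * Complex.exp (2 * Real.pi * Complex.I * 3 * t))) t :=
    h1.add h3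
  rw [h.deriv]
  have key : Complex.exp (2 * Real.pi * Complex.I * 3 * t) + Complex.exp (2 * Real.pi * Complex.I * t)
      = Complex.exp (4 * Real.pi * Complex.I * t) * (2 * (Real.cos (2 * Real.pi * t) : ℂ)) := by
    have hc : ((Real.cos (2 * Real.pi * t) : ℝ) : ℂ) = Complex.cos ((2 * Real.pi * t : ℝ) : ℂ) := by
      rw [Complex.ofReal_cos]
    rw [hc, Complex.cos]
    have e1 : Complex.exp (4 * Real.pi * Complex.I * t) * Complex.exp (((2 * Real.pi * t : ℝ) : ℂ) * Complex.I)
        = Complex.exp (2 * Real.pi * Complex.I * 3 * t) := by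
      rw [← Complex.exp_add]; congr 1; push_cast; ring
    have e2 : Complex.exp (4 * Real.pi * Complex.I * t) * Complex.exp (-((2 * Real.pi * t : ℝ) : ℂ) * Complex.I)
        = Complex.exp (2 * Real.pi * Complex.I * t) := by
      rw [← Complex.exp_add]; congr 1; push_cast; ring
    calc Complex.exp (2 * Real.pi * Complex.I * 3 * t) + Complex.exp (2 * Real.pi * Complex.I * t)
        = Complex.exp (4 * Real.pi * Complex.I * t) * Complex.exp (((2 * Real.pi * t : ℝ) : ℂ) * Complex.I)
          + Complex.exp (4 * Real.pi * Complex.I * t) * Complex.exp (-((2 * Real.pi * t : ℝ) : ℂ) * Complex.I) := by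
          rw [e1, e2]
      _ = _ := by ring
  have expand : (3/2 : ℂ) * ((2 * Real.pi * Complex.I) * Complex.exp (2 * Real.pi * Complex.I * t))
        + (1/2 : ℂ) * ((2 * Real.pi * Complex.I * 3) * Complex.exp (2 * Real.pi * Complex.I * 3 * t))
      = (3 * Real.pi * Complex.I) * (Complex.exp (2 * Real.pi * Complex.I * 3 * t) + Complex.exp (2 * Real.pi * Complex.I * t)) := by
    ring
  rw [expand, key]
  push_cast
  ring

lemma abs_deriv_gamma (t : ℝ) :
    ‖deriv gammaSpecial t‖ = |6 * Real.pi * Real.cos (2 * Real.pi * t)| := by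
  rw [deriv_gamma]
  have harg : (4 * (Real.pi : ℂ) * Complex.I * t) = ((4 * Real.pi * t : ℝ) : ℂ) * Complex.I := by
    push_cast; ring
  rw [norm_mul, norm_mul, harg, Complex.norm_exp_ofReal_mul_I, Complex.norm_I,
    Complex.norm_real, Real.norm_eq_abs]
  ring


/-- The unit tangent vector of `γ_{1,3}^{-1/2}` tends to `i` as `t → (1/4)⁺` and to `-i` as
`t → (1/4)⁻`: the two one-sided unit tangent limits are opposite, so `t = 1/4` is a cusp. -/
theorem gamma_cusp_at_quarter :
    Tendsto (fun t : ℝ => deriv gammaSpecial t / (‖deriv gammaSpecial t‖ : ℂ))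
        (𝓝[>] (1/4 : ℝ)) (𝓝 Complex.I) ∧
      Tendsto (fun t : ℝ => deriv gammaSpecial t / (‖deriv gammaSpecial t‖ : ℂ))
        (𝓝[<] (1/4 : ℝ)) (𝓝 (-Complex.I)) := by
  have hpi := Real.pi_pos
  have hcont : Continuous (fun t : ℝ => Complex.exp (4 * Real.pi * Complex.I * t)) := by
    fun_prop
  constructor
  · -- right limit
    have hs : Set.Ioo (1/4 : ℝ) (1/2) ∈ 𝓝[>] (1/4 : ℝ) :=
      Ioo_mem_nhdsGT_of_mem ⟨le_refl _, by norm_num⟩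
    have hlim : Tendsto (fun t : ℝ => -Complex.I * Complex.exp (4 * Real.pi * Complex.I * t))
        (𝓝[>] (1/4 : ℝ)) (𝓝 Complex.I) := by
      have hc2 : Continuous (fun t : ℝ => -Complex.I * Complex.exp (4 * Real.pi * Complex.I * t)) :=
        continuous_const.mul hcont
      have h := (hc2.tendsto (1/4 : ℝ)).mono_left (nhdsWithin_le_nhds (s := Set.Ioi (1/4 : ℝ)))
      have hval : -Complex.I * Complex.exp (4 * Real.pi * Complex.I * ((1/4 : ℝ) : ℂ)) = Complex.I := by
        have harg : (4 * (Real.pi : ℂ) * Complex.I * ((1/4 : ℝ) : ℂ)) = Real.pi * Complex.I := by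
          push_cast; ring
        rw [harg, Complex.exp_pi_mul_I]; ring
      rwa [hval] at h
    refine hlim.congr' ?_
    filter_upwards [hs] with t ht
    have hcos : Real.cos (2 * Real.pi * t) < 0 := by
      apply Real.cos_neg_of_pi_div_two_lt_of_lt
      · nlinarith [ht.1]
      · nlinarith [ht.2]
    have hC : 6 * Real.pi * Real.cos (2 * Real.pi * t) < 0 := by nlinarith
    have hne : ((6 * Real.pi * Real.cos (2 * Real.pi * t) : ℝ) : ℂ) ≠ 0 := by
      exact_mod_cast ne_of_lt hC
    rw [abs_deriv_gamma, deriv_gamma, abs_of_neg hC, Complex.ofReal_neg, div_neg,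
      mul_div_cancel_left₀ _ hne]
    ring
  · -- left limit
    have hs : Set.Ioo (0 : ℝ) (1/4) ∈ 𝓝[<] (1/4 : ℝ) :=
      Ioo_mem_nhdsLT_of_mem ⟨by norm_num, le_refl _⟩
    have hlim : Tendsto (fun t : ℝ => Complex.I * Complex.exp (4 * Real.pi * Complex.I * t))
        (𝓝[<] (1/4 : ℝ)) (𝓝 (-Complex.I)) := by
      have hc2 : Continuous (fun t : ℝ => Complex.I * Complex.exp (4 * Real.pi * Complex.I * t)) :=
        continuous_const.mul hcont
      have h := (hc2.tendsto (1/4 : ℝ)).mono_left (nhdsWithin_le_nhds (s := Set.Iio (1/4 : ℝ)))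
      have hval : Complex.I * Complex.exp (4 * Real.pi * Complex.I * ((1/4 : ℝ) : ℂ)) = -Complex.I := by
        have harg : (4 * (Real.pi : ℂ) * Complex.I * ((1/4 : ℝ) : ℂ)) = Real.pi * Complex.I := by
          push_cast; ring
        rw [harg, Complex.exp_pi_mul_I]; ring
      rwa [hval] at h
    refine hlim.congr' ?_
    filter_upwards [hs] with t ht
    have hcos : 0 < Real.cos (2 * Real.pi * t) := by
      apply Real.cos_pos_of_mem_Ioo
      constructor
      · nlinarith [ht.1]
      · nlinarith [ht.2]
    have hC : 0 < 6 * Real.pi * Real.cos (2 * Real.pi * t) := by nlinarith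
    have hne : ((6 * Real.pi * Real.cos (2 * Real.pi * t) : ℝ) : ℂ) ≠ 0 := by
      exact_mod_cast ne_of_gt hC
    rw [abs_deriv_gamma, deriv_gamma, abs_of_pos hC, mul_div_cancel_left₀ _ hne]
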